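/- Let b : K → R and d : K → D be injective graph morphisms between labelled directed graphs. Define H by: V_H is the disjoint union V_D + (V_R − b_V(V_K)) (realised as the set of inl(v) for v ∈ V_D together with inr(v) for v ∈ V_R − b_V(V_K)); E_H is the disjoint union E_D + (E_R − b_E(E_K)); the source function sends inl(e) to inl(s_D(e)), and sends inr(e) to inl(d_V(b_V⁻¹(s_R(e)))) if s_R(e) ∈ b_V(V_K) and to inr(s_R(e)) otherwise; the target function is defined analogously with t in place of s; the node labelling sends inl(v) to l_D(v) and inr(v) to l_R(v); the edge labelling is analogous with m in place of l. Then H is a well-formed labelled directed graph: its node and edge sets are finite and its source and target functions map each edge of H to a node of H. -/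

import Mathlib

/-- A (pre)graph: node set, edge set, source/target functions and labelling
functions for nodes and edges. -/
structure PreGraph (V E X Y : Type) where
  nodes : Set V
  edges : Set E
  src : E → V
  tgt : E → V
  labV : V → X
  labE : E → Y

/-- Well-formedness of a labelled directed graph: finite node and edge sets,
and sources/targets of edges are nodes. -/
structure PreGraph.IsGraph {V E X Y : Type} (G : PreGraph V E X Y) : Prop where
  finite_nodes : G.nodes.Finite
  finite_edges : G.edges.Finite
  src_mem : ∀ e ∈ G.edges, G.src e ∈ G.nodes
  tgt_mem : ∀ e ∈ G.edges, G.tgt e ∈ G.nodes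

/-- A pair of node and edge mappings. -/
structure PreMorph (V₁ E₁ V₂ E₂ : Type) where
  fv : V₁ → V₂
  fe : E₁ → E₂

/-- Componentwise composition of morphisms. -/
def PreMorph.comp {V₁ E₁ V₂ E₂ V₃ E₃ : Type}
    (g : PreMorph V₂ E₂ V₃ E₃) (f : PreMorph V₁ E₁ V₂ E₂) :
    PreMorph V₁ E₁ V₃ E₃ :=
  ⟨g.fv ∘ f.fv, g.fe ∘ f.fe⟩

/-- `f` is a graph morphism from `G` to `H`: it maps nodes to nodes and edges
to edges, preserves sources and targets, and preserves node and edge labels. -/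
structure IsMorphism {V₁ E₁ V₂ E₂ X Y : Type}
    (G : PreGraph V₁ E₁ X Y) (H : PreGraph V₂ E₂ X Y)
    (f : PreMorph V₁ E₁ V₂ E₂) : Prop where
  node_range : ∀ v ∈ G.nodes, f.fv v ∈ H.nodes
  edge_range : ∀ e ∈ G.edges, f.fe e ∈ H.edges
  src_pres : ∀ e ∈ G.edges, f.fv (G.src e) = H.src (f.fe e)
  tgt_pres : ∀ e ∈ G.edges, f.fv (G.tgt e) = H.tgt (f.fe e)
  labV_pres : ∀ v ∈ G.nodes, G.labV v = H.labV (f.fv v)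
  labE_pres : ∀ e ∈ G.edges, G.labE e = H.labE (f.fe e)

/-- An injective graph morphism: a graph morphism whose node and edge
components are injective on the node and edge sets of the domain. -/
structure IsInjMorphism {V₁ E₁ V₂ E₂ X Y : Type}
    (G : PreGraph V₁ E₁ X Y) (H : PreGraph V₂ E₂ X Y)
    (f : PreMorph V₁ E₁ V₂ E₂) extends IsMorphism G H f : Prop where
  injV : Set.InjOn f.fv G.nodes
  injE : Set.InjOn f.fe G.edges

open scoped Classical

/-- The gluing of `D` and `R` according to `d` (for `b : K → R`, `d : K → D`),
with node set `V_D + (V_R − b_V(V_K))` and edge set `E_D + (E_R − b_E(E_K))`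
realised via `Sum.inl`/`Sum.inr`.  Here `bInvV`/`bInvE` denote the inverse of
`b` on its image. -/
noncomputable def Gluing {VK EK VD ED VR ER X Y : Type}
    (K : PreGraph VK EK X Y) (D : PreGraph VD ED X Y) (R : PreGraph VR ER X Y)
    (b : PreMorph VK EK VR ER) (d : PreMorph VK EK VD ED)
    (bInvV : VR → VK) (bInvE : ER → EK) : PreGraph (VD ⊕ VR) (ED ⊕ ER) X Y where
  nodes := Sum.inl '' D.nodes ∪ Sum.inr '' (R.nodes \ b.fv '' K.nodes)
  edges := Sum.inl '' D.edges ∪ Sum.inr '' (R.edges \ b.fe '' K.edges)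
  src := fun e => match e with
    | Sum.inl e => Sum.inl (D.src e)
    | Sum.inr e =>
        if R.src e ∈ b.fv '' K.nodes then Sum.inl (d.fv (bInvV (R.src e)))
        else Sum.inr (R.src e)
  tgt := fun e => match e with
    | Sum.inl e => Sum.inl (D.tgt e)
    | Sum.inr e =>
        if R.tgt e ∈ b.fv '' K.nodes then Sum.inl (d.fv (bInvV (R.tgt e)))
        else Sum.inr (R.tgt e)
  labV := fun v => match v with
    | Sum.inl v => D.labV v
    | Sum.inr v => R.labV v
  labE := fun e => match e with
    | Sum.inl e => D.labE e
    | Sum.inr e => R.labE e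

/-- The morphism `c = (inl, inl) : D → H` of the gluing construction. -/
def GluingC (VD ED VR ER : Type) : PreMorph VD ED (VD ⊕ VR) (ED ⊕ ER) :=
  ⟨Sum.inl, Sum.inl⟩

/-- The morphism `h : R → H` of the gluing construction:
`h(x) = inr x` if `x ∈ R − b(K)`, and `h(x) = inl (d (b⁻¹ x))` otherwise. -/
noncomputable def GluingH {VK EK VD ED VR ER X Y : Type}
    (K : PreGraph VK EK X Y) (R : PreGraph VR ER X Y)
    (b : PreMorph VK EK VR ER) (d : PreMorph VK EK VD ED)
    (bInvV : VR → VK) (bInvE : ER → EK) : PreMorph VR ER (VD ⊕ VR) (ED ⊕ ER) :=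
  ⟨fun v => if v ∈ R.nodes \ b.fv '' K.nodes then Sum.inr v
            else Sum.inl (d.fv (bInvV v)),
   fun e => if e ∈ R.edges \ b.fe '' K.edges then Sum.inr e
            else Sum.inl (d.fe (bInvE e))⟩

/-- the gluing of `D` and `R` according to `d` is a well-formed
labelled directed graph. -/
theorem gluing_isGraph {VK EK VD ED VR ER X Y : Type}
    (K : PreGraph VK EK X Y) (D : PreGraph VD ED X Y) (R : PreGraph VR ER X Y)
    (b : PreMorph VK EK VR ER) (d : PreMorph VK EK VD ED)
    (hK : K.IsGraph) (hD : D.IsGraph) (hR : R.IsGraph)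
    (hb : IsInjMorphism K R b) (hd : IsInjMorphism K D d)
    (bInvV : VR → VK) (bInvE : ER → EK)
    (hInvV : ∀ v ∈ K.nodes, bInvV (b.fv v) = v)
    (hInvE : ∀ e ∈ K.edges, bInvE (b.fe e) = e) :
    (Gluing K D R b d bInvV bInvE).IsGraph := by
  constructor
  · exact (hD.finite_nodes.image _).union
      (hR.finite_nodes.diff.image _)
  · exact (hD.finite_edges.image _).union
      (hR.finite_edges.diff.image _)
  · rintro e (⟨e, he, rfl⟩ | ⟨e, he, rfl⟩)
    · exact Or.inl ⟨_, hD.src_mem e he, rfl⟩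
    · simp only [Gluing]
      split_ifs with h
      · obtain ⟨k, hk, hke⟩ := h
        refine Or.inl ⟨_, ?_, rfl⟩
        rw [← hke, hInvV k hk]
        exact hd.node_range k hk
      · exact Or.inr ⟨_, ⟨hR.src_mem e he.1, h⟩, rfl⟩
  · rintro e (⟨e, he, rfl⟩ | ⟨e, he, rfl⟩)
    · exact Or.inl ⟨_, hD.tgt_mem e he, rfl⟩
    · simp only [Gluing]
      split_ifs with h
      · obtain ⟨k, hk, hke⟩ := h
        refine Or.inl ⟨_, ?_, rfl⟩
        rw [← hke, hInvV k hk]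
        exact hd.node_range k hk
      · exact Or.inr ⟨_, ⟨hR.tgt_mem e he.1, h⟩, rfl⟩
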